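/- Let K be a field complete with respect to a nontrivial non-archimedean absolute value, with valuation ring R a discrete valuation ring. Let φ ∈ K⟦X⟧ be a formal power series with zero constant term. Then there exists a radius r ∈ (0,1] at which the graph of φ is analytically trivialized if and only if φ has positive radius of convergence. (This is the graph case of the Proposition stating that a smooth formal subscheme is K-analytic if and only if its size is a positive real number.) -/

import Mathlib

noncomputable section

open Filter PowerSeries

namespace NA

/-- The valuation ring `R = {x : K | ‖x‖ ≤ 1}` of a nonarchimedean normed field. -/
def integers (K : Type*) [NormedField K] [IsUltrametricDist K] : Subring K where
  carrier := {x : K | ‖x‖ ≤ 1}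
  mul_mem' {a b} ha hb := by
    simp only [Set.mem_setOf_eq, norm_mul] at *
    calc ‖a‖ * ‖b‖ ≤ 1 * 1 := mul_le_mul ha hb (norm_nonneg _) zero_le_one
    _ = 1 := one_mul 1
  one_mem' := by simp
  add_mem' {a b} ha hb := (IsUltrametricDist.norm_add_le_max a b).trans (max_le ha hb)
  zero_mem' := by simp
  neg_mem' {a} ha := by simpa using ha

/-- Composition `φ ∘ ψ` of formal power series in one variable
(this gives `φ(ψ)` whenever `ψ` has zero constant term). -/
def comp {K : Type*} [CommSemiring K] (φ ψ : PowerSeries K) : PowerSeries K :=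
  PowerSeries.mk fun n =>
    ∑ k ∈ Finset.range (n + 1), PowerSeries.coeff (R := K) k φ * PowerSeries.coeff (R := K) n (ψ ^ k)

/-- The one-variable series `T ↦ f(T, 0)` obtained from a two-variable series `f`. -/
def line1 {K : Type*} [CommSemiring K] (f : MvPowerSeries (Fin 2) K) : PowerSeries K :=
  PowerSeries.mk fun n => MvPowerSeries.coeff (R := K) (Finsupp.single (0 : Fin 2) n) f

/-- The statement `‖f‖_r ≤ c`, where `‖f‖_r = sup_I ‖a_I‖ r^{|I|}` is the Gauss norm of the
multivariate formal power series `f = Σ_I a_I X^I`. -/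
def NormLE {K : Type*} [NormedField K] {N : ℕ} (r : ℝ) (f : MvPowerSeries (Fin N) K)
    (c : ℝ) : Prop :=
  ∀ I : Fin N →₀ ℕ, ‖MvPowerSeries.coeff (R := K) I f‖ * r ^ (∑ j, I j) ≤ c

/-- The graph of `φ` is analytically trivialized at radius `r`: there is a pair
`f = (f₁, f₂)` of two-variable power series, vanishing at the origin, with `‖f_j‖_r ≤ r`,
whose Jacobian matrix at the origin lies in `GL₂(R)` (entries of norm `≤ 1`, determinant of
norm `1`), and such that `f₂(T,0) = φ(f₁(T,0))`. -/
def GraphTrivAt {K : Type*} [NormedField K] (φ : PowerSeries K) (r : ℝ) : Prop :=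
  ∃ f₁ f₂ : MvPowerSeries (Fin 2) K,
    MvPowerSeries.constantCoeff (σ := Fin 2) (R := K) f₁ = 0 ∧
    MvPowerSeries.constantCoeff (σ := Fin 2) (R := K) f₂ = 0 ∧
    NormLE r f₁ r ∧ NormLE r f₂ r ∧
    ‖MvPowerSeries.coeff (R := K) (Finsupp.single (0 : Fin 2) 1) f₁‖ ≤ 1 ∧
    ‖MvPowerSeries.coeff (R := K) (Finsupp.single (1 : Fin 2) 1) f₁‖ ≤ 1 ∧
    ‖MvPowerSeries.coeff (R := K) (Finsupp.single (0 : Fin 2) 1) f₂‖ ≤ 1 ∧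
    ‖MvPowerSeries.coeff (R := K) (Finsupp.single (1 : Fin 2) 1) f₂‖ ≤ 1 ∧
    ‖MvPowerSeries.coeff (R := K) (Finsupp.single (0 : Fin 2) 1) f₁ *
        MvPowerSeries.coeff (R := K) (Finsupp.single (1 : Fin 2) 1) f₂ -
      MvPowerSeries.coeff (R := K) (Finsupp.single (1 : Fin 2) 1) f₁ *
        MvPowerSeries.coeff (R := K) (Finsupp.single (0 : Fin 2) 1) f₂‖ = 1 ∧
    line1 f₂ = comp φ (line1 f₁)

end NA

namespace NAProof

variable {K : Type*} [NormedField K] [IsUltrametricDist K]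

/-- coefficients of `ψ^k` vanish below degree `k` when `ψ(0)=0`. -/
lemma coeff_pow_eq_zero {ψ : PowerSeries K} (hψ : constantCoeff (R := K) ψ = 0) :
    ∀ k n, n < k → PowerSeries.coeff (R := K) n (ψ ^ k) = 0 := by
  intro k
  induction k with
  | zero => intro n hn; omega
  | succ k ih =>
    intro n hn
    rw [pow_succ, PowerSeries.coeff_mul]
    apply Finset.sum_eq_zero
    rintro ⟨p, q⟩ hpq
    rw [Finset.HasAntidiagonal.mem_antidiagonal] at hpq
    rcases Nat.eq_zero_or_pos q with hq | hq
    · subst hq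
      rw [PowerSeries.coeff_zero_eq_constantCoeff, hψ, mul_zero]
    · rw [ih p (by omega), zero_mul]

lemma coeff_pow_self {ψ : PowerSeries K} (hψ : constantCoeff (R := K) ψ = 0) :
    ∀ n, PowerSeries.coeff (R := K) n (ψ ^ n) = (PowerSeries.coeff (R := K) 1 ψ) ^ n := by
  intro n
  induction n with
  | zero => simp
  | succ n ih =>
    rw [pow_succ, PowerSeries.coeff_mul]
    rw [Finset.sum_eq_single (n, 1)]
    · rw [ih, pow_succ]
    · rintro ⟨p, q⟩ hpq hne
      rw [Finset.HasAntidiagonal.mem_antidiagonal] at hpq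
      rcases Nat.eq_zero_or_pos q with hq | hq
      · subst hq
        rw [PowerSeries.coeff_zero_eq_constantCoeff, hψ, mul_zero]
      · have hpn : p < n := by
          rcases Nat.lt_or_ge p n with h | h
          · exact h
          · exfalso; apply hne
            have : p = n := by omega
            subst this
            simp only [Prod.mk.injEq, true_and]
            omega
        rw [coeff_pow_eq_zero hψ n p hpn, zero_mul]
    · intro h
      exact absurd (Finset.HasAntidiagonal.mem_antidiagonal.mpr (by omega)) h

/-- Key estimate on coefficients of powers. -/
lemma coeff_pow_bound {ψ : PowerSeries K} (hψ : constantCoeff (R := K) ψ = 0)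
    {r : ℝ} (hr0 : 0 < r)
    (ha1 : ‖PowerSeries.coeff (R := K) 1 ψ‖ ≤ 1)
    (hcoef : ∀ q, ‖PowerSeries.coeff (R := K) q ψ‖ * r ^ q ≤ r) :
    ∀ k n, ‖PowerSeries.coeff (R := K) n (ψ ^ k)‖ *
        (r ^ n * ‖PowerSeries.coeff (R := K) 1 ψ‖ ^ n) ≤
      r ^ k * ‖PowerSeries.coeff (R := K) 1 ψ‖ ^ (2 * k) := by
  set A := ‖PowerSeries.coeff (R := K) 1 ψ‖ with hA
  have hA0 : 0 ≤ A := norm_nonneg _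
  intro k
  induction k with
  | zero =>
    intro n
    rcases Nat.eq_zero_or_pos n with hn | hn
    · subst hn; simp
    · rw [pow_zero, PowerSeries.coeff_one, if_neg (by omega)]
      simp only [norm_zero, zero_mul, mul_zero, pow_zero, mul_one]
      norm_num
  | succ k ih =>
    intro n
    rw [pow_succ, PowerSeries.coeff_mul]
    have hne : (Finset.HasAntidiagonal.antidiagonal n).Nonempty := ⟨(n, 0), by simp⟩
    obtain ⟨⟨p, q⟩, hmem, hsup⟩ := Finset.exists_mem_eq_sup' hne
      (fun t => ‖PowerSeries.coeff (R := K) t.1 (ψ ^ k) * PowerSeries.coeff (R := K) t.2 ψ‖)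
    rw [Finset.HasAntidiagonal.mem_antidiagonal] at hmem
    have hsum : ‖∑ t ∈ Finset.HasAntidiagonal.antidiagonal n,
        PowerSeries.coeff (R := K) t.1 (ψ ^ k) * PowerSeries.coeff (R := K) t.2 ψ‖ ≤
        ‖PowerSeries.coeff (R := K) p (ψ ^ k) * PowerSeries.coeff (R := K) q ψ‖ :=
      (hne.norm_sum_le_sup'_norm _).trans_eq hsup
    have hP : (0:ℝ) ≤ r ^ n * A ^ n := by positivity
    refine le_trans (mul_le_mul_of_nonneg_right hsum hP) ?_
    -- per-term bound
    rcases Nat.eq_zero_or_pos q with hq | hq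
    · subst hq
      rw [PowerSeries.coeff_zero_eq_constantCoeff, hψ, mul_zero, norm_zero, zero_mul]
      positivity
    · -- q ≥ 1
      have hfac : ‖PowerSeries.coeff (R := K) q ψ‖ * (r ^ q * A ^ q) ≤ r * A ^ 2 := by
        rcases eq_or_lt_of_le (show 1 ≤ q from hq) with hq1 | hq2
        · -- q = 1
          rw [← hq1, pow_one, pow_one, ← hA]
          calc A * (r * A) = r * A ^ 2 := by ring
          _ ≤ r * A ^ 2 := le_refl _
        · -- q ≥ 2
          have h1 : ‖PowerSeries.coeff (R := K) q ψ‖ * r ^ q ≤ r := hcoef q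
          have h2 : A ^ q ≤ A ^ 2 := pow_le_pow_of_le_one hA0 ha1 hq2
          calc ‖PowerSeries.coeff (R := K) q ψ‖ * (r ^ q * A ^ q)
              = (‖PowerSeries.coeff (R := K) q ψ‖ * r ^ q) * A ^ q := by ring
          _ ≤ r * A ^ 2 := mul_le_mul h1 h2 (by positivity) hr0.le
      calc ‖PowerSeries.coeff (R := K) p (ψ ^ k) * PowerSeries.coeff (R := K) q ψ‖ * (r ^ n * A ^ n)
          = (‖PowerSeries.coeff (R := K) p (ψ ^ k)‖ * (r ^ p * A ^ p)) *
            (‖PowerSeries.coeff (R := K) q ψ‖ * (r ^ q * A ^ q)) := by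
            rw [norm_mul, ← hmem, pow_add, pow_add]; ring
      _ ≤ (r ^ k * A ^ (2 * k)) * (r * A ^ 2) := by
            apply mul_le_mul (ih p) hfac (by positivity) (by positivity)
      _ = r ^ (k + 1) * A ^ (2 * (k + 1)) := by ring

lemma sum_single (i : Fin 2) (n : ℕ) : (∑ j, (Finsupp.single i n) j) = n := by
  rw [Fin.sum_univ_two]
  fin_cases i <;> simp

lemma main_bound' {K : Type*} [NormedField K] [IsUltrametricDist K]
    (φ : PowerSeries K) (hφ0 : PowerSeries.constantCoeff (R := K) φ = 0)
    {r : ℝ} (hr0 : 0 < r) (hr1 : r ≤ 1)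
    {f₁ f₂ : MvPowerSeries (Fin 2) K}
    (hN₁ : NA.NormLE r f₁ r) (hN₂ : NA.NormLE r f₂ r)
    (hA : ‖MvPowerSeries.coeff (R := K) (Finsupp.single (0 : Fin 2) 1) f₁‖ ≤ 1)
    (hline : NA.line1 f₂ = NA.comp φ (NA.line1 f₁))
    (h₁0 : MvPowerSeries.constantCoeff (σ := Fin 2) (R := K) f₁ = 0) :
    ∀ n, ‖PowerSeries.coeff (R := K) n φ‖ *
      (r ^ n * ‖MvPowerSeries.coeff (R := K) (Finsupp.single (0 : Fin 2) 1) f₁‖ ^ (2 * n)) ≤ r := by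
  set ψ := NA.line1 f₁ with hψdef
  have hcψ : ∀ q, PowerSeries.coeff (R := K) q ψ = MvPowerSeries.coeff (R := K) (Finsupp.single (0 : Fin 2) q) f₁ :=
    fun q => PowerSeries.coeff_mk _ _
  set A := ‖MvPowerSeries.coeff (R := K) (Finsupp.single (0 : Fin 2) 1) f₁‖ with hAdef
  have hA1 : ‖PowerSeries.coeff (R := K) 1 ψ‖ = A := by rw [hcψ 1]
  have hA0 : (0:ℝ) ≤ A := norm_nonneg _
  have hψ0 : constantCoeff (R := K) ψ = 0 := by
    rw [← PowerSeries.coeff_zero_eq_constantCoeff, hcψ 0, Finsupp.single_zero]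
    exact h₁0
  have hcoefψ : ∀ q, ‖PowerSeries.coeff (R := K) q ψ‖ * r ^ q ≤ r := by
    intro q
    rw [hcψ q]
    have := hN₁ (Finsupp.single (0 : Fin 2) q)
    rwa [sum_single] at this
  have hb : ∀ n, ‖PowerSeries.coeff (R := K) n (NA.line1 f₂)‖ * r ^ n ≤ r := by
    intro n
    simp only [NA.line1, PowerSeries.coeff_mk]
    have := hN₂ (Finsupp.single (0 : Fin 2) n)
    rwa [sum_single] at this
  have hE := coeff_pow_bound hψ0 hr0 (by rw [hA1]; exact hA) hcoefψ
  simp only [hA1] at hE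
  have hrel : ∀ n, PowerSeries.coeff (R := K) n (NA.line1 f₂) =
      ∑ k ∈ Finset.range (n + 1),
        PowerSeries.coeff (R := K) k φ * PowerSeries.coeff (R := K) n (ψ ^ k) := by
    intro n
    rw [hline]
    simp only [NA.comp, PowerSeries.coeff_mk]
  intro n
  induction n using Nat.strong_induction_on with
  | _ n ih =>
    rcases Nat.eq_zero_or_pos n with hn | hn
    · subst hn
      rw [← PowerSeries.coeff_zero_eq_constantCoeff] at hφ0
      rw [hφ0, norm_zero, zero_mul]
      exact hr0.le
    · have hsplit := hrel n
      rw [Finset.sum_range_succ, coeff_pow_self hψ0] at hsplit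
      set S := ∑ k ∈ Finset.range n,
        PowerSeries.coeff (R := K) k φ * PowerSeries.coeff (R := K) n (ψ ^ k) with hSdef
      have heq : PowerSeries.coeff (R := K) n φ * (PowerSeries.coeff (R := K) 1 ψ) ^ n =
          PowerSeries.coeff (R := K) n (NA.line1 f₂) - S := by
        rw [hsplit]; ring
      have hmax : ‖PowerSeries.coeff (R := K) n φ * (PowerSeries.coeff (R := K) 1 ψ) ^ n‖ ≤
          max ‖PowerSeries.coeff (R := K) n (NA.line1 f₂)‖ ‖S‖ := by
        rw [heq, sub_eq_add_neg]
        exact (IsUltrametricDist.norm_add_le_max _ _).trans (by rw [norm_neg])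
      have hP : (0:ℝ) ≤ r ^ n * A ^ n := by positivity
      have hgoal_eq : ‖PowerSeries.coeff (R := K) n φ‖ * (r ^ n * A ^ (2 * n)) =
          ‖PowerSeries.coeff (R := K) n φ * (PowerSeries.coeff (R := K) 1 ψ) ^ n‖ * (r ^ n * A ^ n) := by
        rw [norm_mul, norm_pow, hA1, two_mul, pow_add]; ring
      rw [hgoal_eq]
      refine le_trans (mul_le_mul_of_nonneg_right hmax hP) ?_
      rw [max_mul_of_nonneg _ _ hP]
      apply max_le
      · calc ‖PowerSeries.coeff (R := K) n (NA.line1 f₂)‖ * (r ^ n * A ^ n)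
            = (‖PowerSeries.coeff (R := K) n (NA.line1 f₂)‖ * r ^ n) * A ^ n := by ring
        _ ≤ r * 1 := mul_le_mul (hb n) (pow_le_one₀ hA0 hA) (by positivity) hr0.le
        _ = r := mul_one r
      · have hne : (Finset.range n).Nonempty := ⟨0, Finset.mem_range.mpr hn⟩
        obtain ⟨k, hk, hsupk⟩ := Finset.exists_mem_eq_sup' hne
          (fun k => ‖PowerSeries.coeff (R := K) k φ * PowerSeries.coeff (R := K) n (ψ ^ k)‖)
        have hS : ‖S‖ ≤ ‖PowerSeries.coeff (R := K) k φ * PowerSeries.coeff (R := K) n (ψ ^ k)‖ :=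
          (hne.norm_sum_le_sup'_norm _).trans_eq hsupk
        refine le_trans (mul_le_mul_of_nonneg_right hS hP) ?_
        rw [norm_mul, mul_assoc]
        calc ‖PowerSeries.coeff (R := K) k φ‖ * (‖PowerSeries.coeff (R := K) n (ψ ^ k)‖ * (r ^ n * A ^ n))
            ≤ ‖PowerSeries.coeff (R := K) k φ‖ * (r ^ k * A ^ (2 * k)) :=
              mul_le_mul_of_nonneg_left (hE k n) (norm_nonneg _)
        _ ≤ r := ih k (Finset.mem_range.mp hk)

/-- The forward direction. -/
lemma forward {K : Type*} [NormedField K] [IsUltrametricDist K]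
    (φ : PowerSeries K) (hφ0 : PowerSeries.constantCoeff (R := K) φ = 0)
    {r : ℝ} (hr0 : 0 < r) (hr1 : r ≤ 1)
    {f₁ f₂ : MvPowerSeries (Fin 2) K}
    (h₁0 : MvPowerSeries.constantCoeff (σ := Fin 2) (R := K) f₁ = 0)
    (hN₁ : NA.NormLE r f₁ r) (hN₂ : NA.NormLE r f₂ r)
    (hA : ‖MvPowerSeries.coeff (R := K) (Finsupp.single (0 : Fin 2) 1) f₁‖ ≤ 1)
    (hdet : ‖MvPowerSeries.coeff (R := K) (Finsupp.single (0 : Fin 2) 1) f₁ *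
        MvPowerSeries.coeff (R := K) (Finsupp.single (1 : Fin 2) 1) f₂ -
      MvPowerSeries.coeff (R := K) (Finsupp.single (1 : Fin 2) 1) f₁ *
        MvPowerSeries.coeff (R := K) (Finsupp.single (0 : Fin 2) 1) f₂‖ = 1)
    (hline : NA.line1 f₂ = NA.comp φ (NA.line1 f₁)) :
    ∃ s : ℝ, 0 < s ∧
      Filter.Tendsto (fun i : ℕ => ‖PowerSeries.coeff (R := K) i φ‖ * s ^ i)
        Filter.atTop (nhds 0) := by
  set a : K := MvPowerSeries.coeff (R := K) (Finsupp.single (0 : Fin 2) 1) f₁ with hadef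
  -- the first-column entry of the Jacobian of f₂ is c₁ * a
  have hC : MvPowerSeries.coeff (R := K) (Finsupp.single (0 : Fin 2) 1) f₂ =
      PowerSeries.coeff (R := K) 1 φ * a := by
    have h1 : PowerSeries.coeff (R := K) 1 (NA.line1 f₂) =
        MvPowerSeries.coeff (R := K) (Finsupp.single (0 : Fin 2) 1) f₂ := by
      rw [NA.line1, PowerSeries.coeff_mk]
    rw [← h1, hline, NA.comp, PowerSeries.coeff_mk]
    rw [Finset.sum_range_succ, Finset.sum_range_one]
    rw [pow_zero, pow_one, PowerSeries.coeff_one, if_neg one_ne_zero, mul_zero, zero_add]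
    rw [NA.line1, PowerSeries.coeff_mk]
  have ha0 : a ≠ 0 := by
    intro h
    rw [hC, h] at hdet
    simp at hdet
  have hA0 : (0:ℝ) < ‖a‖ := norm_pos_iff.mpr ha0
  have key := main_bound' φ hφ0 hr0 hr1 hN₁ hN₂ hA hline h₁0
  refine ⟨r * ‖a‖ ^ 2 / 2, by positivity, ?_⟩
  apply squeeze_zero (g := fun n => r * (1/2) ^ n)
  · intro n; positivity
  · intro n
    have hsn : (r * ‖a‖ ^ 2 / 2) ^ n = (r ^ n * ‖a‖ ^ (2 * n)) * (1/2) ^ n := by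
      rw [div_eq_mul_one_div, mul_pow, mul_pow, ← pow_mul]
    rw [hsn, ← mul_assoc]
    exact mul_le_mul_of_nonneg_right (key n) (by positivity)
  · have := (tendsto_pow_atTop_nhds_zero_of_lt_one (by norm_num : (0:ℝ) ≤ 1/2)
      (by norm_num)).const_mul r
    simpa using this


/-- The backward construction. -/
lemma backward {K : Type*} [NormedField K] [IsUltrametricDist K]
    (φ : PowerSeries K) (hφ0 : PowerSeries.constantCoeff (R := K) φ = 0)
    {s : ℝ} (hs : 0 < s)
    (htend : Filter.Tendsto (fun i : ℕ => ‖PowerSeries.coeff (R := K) i φ‖ * s ^ i)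
      Filter.atTop (nhds 0)) :
    ∃ r : ℝ, r ∈ Set.Ioc (0 : ℝ) 1 ∧ NA.GraphTrivAt φ r := by
  classical
  -- bound on coefficients
  obtain ⟨B₀, hB₀⟩ := htend.bddAbove_range
  set B : ℝ := max B₀ 1 with hBdef
  have hB1 : (1:ℝ) ≤ B := le_max_right _ _
  have hB0 : (0:ℝ) < B := lt_of_lt_of_le one_pos hB1
  have hBb : ∀ n : ℕ, ‖PowerSeries.coeff (R := K) n φ‖ * s ^ n ≤ B := by
    intro n
    exact le_trans (hB₀ (Set.mem_range_self n)) (le_max_left _ _)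
  -- choose parameters
  set c₁ : K := PowerSeries.coeff (R := K) 1 φ with hc₁
  obtain ⟨a, b, d, ha0, ha1, hb1, hd1, hca, hdet⟩ :
      ∃ a b d : K, a ≠ 0 ∧ ‖a‖ ≤ 1 ∧ ‖b‖ ≤ 1 ∧ ‖d‖ ≤ 1 ∧ ‖c₁ * a‖ ≤ 1 ∧
        ‖a * d - b * (c₁ * a)‖ = 1 := by
    by_cases h1 : ‖c₁‖ ≤ 1
    · exact ⟨1, 0, 1, one_ne_zero, by simp, by simp, by simp,
        by simpa using h1, by simp⟩
    · push_neg at h1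
      have hc0 : c₁ ≠ 0 := by
        intro h; rw [h, norm_zero] at h1; linarith
      refine ⟨c₁⁻¹, 1, 0, inv_ne_zero hc0, ?_, by simp, by simp, ?_, ?_⟩
      · rw [norm_inv]
        exact inv_le_one_of_one_le₀ h1.le
      · rw [mul_inv_cancel₀ hc0, norm_one]
      · rw [mul_zero, mul_inv_cancel₀ hc0, zero_sub, mul_one, norm_neg, norm_one]
  -- the radius
  set r : ℝ := min 1 (min s (s * s / B)) with hrdef
  have hr0 : 0 < r := by
    apply lt_min one_pos
    apply lt_min hs
    positivity
  have hr1 : r ≤ 1 := min_le_left _ _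
  have hrs : r ≤ s := le_trans (min_le_right _ _) (min_le_left _ _)
  have hrB : r ≤ s * s / B := le_trans (min_le_right _ _) (min_le_right _ _)
  -- the series
  set f₁ : MvPowerSeries (Fin 2) K := fun I =>
    if I = Finsupp.single (0 : Fin 2) 1 then a
    else if I = Finsupp.single (1 : Fin 2) 1 then b else 0 with hf₁
  set f₂ : MvPowerSeries (Fin 2) K := fun I =>
    if I = Finsupp.single (1 : Fin 2) 1 then d
    else if I 1 = 0 ∧ I 0 ≠ 0 then PowerSeries.coeff (R := K) (I 0) φ * a ^ (I 0) else 0 with hf₂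
  have hne01 : (Finsupp.single (0 : Fin 2) 1) ≠ Finsupp.single (1 : Fin 2) 1 := by
    intro h
    have := DFunLike.congr_fun h (0 : Fin 2)
    simp at this
  have hs0 : ∀ n : ℕ, (Finsupp.single (0 : Fin 2) n) ≠ Finsupp.single (1 : Fin 2) 1 := by
    intro n h
    have := DFunLike.congr_fun h (1 : Fin 2)
    simp at this
  -- coefficient computations
  have hcf₁ : ∀ I, MvPowerSeries.coeff (R := K) I f₁ =
      if I = Finsupp.single (0 : Fin 2) 1 then a
      else if I = Finsupp.single (1 : Fin 2) 1 then b else 0 := fun I => rfl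
  have hcf₂ : ∀ I, MvPowerSeries.coeff (R := K) I f₂ =
      if I = Finsupp.single (1 : Fin 2) 1 then d
      else if I 1 = 0 ∧ I 0 ≠ 0 then PowerSeries.coeff (R := K) (I 0) φ * a ^ (I 0) else 0 :=
    fun I => rfl
  -- norms of degree ≥ 2 coefficients of φ(aX)
  have hkey : ∀ n : ℕ, n ≠ 0 → ‖PowerSeries.coeff (R := K) n φ * a ^ n‖ * r ^ n ≤ r := by
    intro n hn
    rcases Nat.lt_or_ge n 2 with h2 | h2
    · interval_cases n
      · omega
      · rw [pow_one, pow_one, mul_comm (PowerSeries.coeff (R := K) 1 φ) a]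
        calc ‖a * PowerSeries.coeff (R := K) 1 φ‖ * r ≤ 1 * r := by
              apply mul_le_mul_of_nonneg_right _ hr0.le
              rwa [mul_comm a, ← hc₁]
        _ = r := one_mul r
    · -- n ≥ 2
      have hcn : ‖PowerSeries.coeff (R := K) n φ‖ ≤ B / s ^ n := by
        rw [le_div_iff₀ (by positivity)]
        exact hBb n
      have han : ‖a ^ n‖ ≤ 1 := by
        rw [norm_pow]
        exact pow_le_one₀ (norm_nonneg _) ha1
      calc ‖PowerSeries.coeff (R := K) n φ * a ^ n‖ * r ^ n
          = ‖PowerSeries.coeff (R := K) n φ‖ * ‖a ^ n‖ * r ^ n := by rw [norm_mul]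
      _ ≤ (B / s ^ n) * 1 * r ^ n := by
            apply mul_le_mul_of_nonneg_right _ (by positivity)
            exact mul_le_mul hcn han (norm_nonneg _) (by positivity)
      _ = B * (r / s) ^ n := by rw [mul_one, div_pow]; ring
      _ ≤ B * (r / s) ^ 2 := by
            apply mul_le_mul_of_nonneg_left _ hB0.le
            apply pow_le_pow_of_le_one (by positivity) _ h2
            rw [div_le_one hs]
            exact hrs
      _ = (B * r / (s * s)) * r := by field_simp
      _ ≤ 1 * r := by
            apply mul_le_mul_of_nonneg_right _ hr0.le
            rw [div_le_one (by positivity)]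
            calc B * r ≤ B * (s * s / B) := by
                  exact mul_le_mul_of_nonneg_left hrB hB0.le
            _ = s * s := by field_simp
      _ = r := one_mul r
  have e1 : MvPowerSeries.coeff (R := K) (Finsupp.single (0 : Fin 2) 1) f₁ = a := by
    rw [hcf₁, if_pos rfl]
  have e2 : MvPowerSeries.coeff (R := K) (Finsupp.single (1 : Fin 2) 1) f₁ = b := by
    rw [hcf₁, if_neg (Ne.symm hne01), if_pos rfl]
  have e3 : MvPowerSeries.coeff (R := K) (Finsupp.single (0 : Fin 2) 1) f₂ = c₁ * a := by
    rw [hcf₂, if_neg hne01, if_pos ⟨by simp, by simp⟩]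
    simp [hc₁]
  have e4 : MvPowerSeries.coeff (R := K) (Finsupp.single (1 : Fin 2) 1) f₂ = d := by
    rw [hcf₂, if_pos rfl]
  refine ⟨r, ⟨hr0, hr1⟩, f₁, f₂, ?_, ?_, ?_, ?_, ?_, ?_, ?_, ?_, ?_, ?_⟩
  · -- constantCoeff f₁ = 0
    rw [← MvPowerSeries.coeff_zero_eq_constantCoeff, hcf₁]
    rw [if_neg, if_neg]
    · intro h
      have := DFunLike.congr_fun h (1 : Fin 2); simp at this
    · intro h
      have := DFunLike.congr_fun h (0 : Fin 2); simp at this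
  · -- constantCoeff f₂ = 0
    rw [← MvPowerSeries.coeff_zero_eq_constantCoeff, hcf₂]
    rw [if_neg, if_neg]
    · simp
    · intro h
      have := DFunLike.congr_fun h (1 : Fin 2); simp at this
  · -- NormLE f₁
    intro I
    rw [hcf₁]
    split_ifs with h1 h2
    · subst h1
      rw [sum_single, pow_one]
      calc ‖a‖ * r ≤ 1 * r := mul_le_mul_of_nonneg_right ha1 hr0.le
      _ = r := one_mul r
    · subst h2
      rw [sum_single, pow_one]
      calc ‖b‖ * r ≤ 1 * r := mul_le_mul_of_nonneg_right hb1 hr0.le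
      _ = r := one_mul r
    · rw [norm_zero, zero_mul]; exact hr0.le
  · -- NormLE f₂
    intro I
    rw [hcf₂]
    split_ifs with h1 h2
    · subst h1
      rw [sum_single, pow_one]
      calc ‖d‖ * r ≤ 1 * r := mul_le_mul_of_nonneg_right hd1 hr0.le
      _ = r := one_mul r
    · have hsum : (∑ j, I j) = I 0 := by
        rw [Fin.sum_univ_two, h2.1, add_zero]
      rw [hsum]
      exact hkey (I 0) h2.2
    · rw [norm_zero, zero_mul]; exact hr0.le
  · rw [e1]; exact ha1
  · rw [e2]; exact hb1
  · rw [e3]; exact hca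
  · rw [e4]; exact hd1
  · rw [e1, e2, e3, e4]; exact hdet
  · -- line1 equality
    have hψ : NA.line1 f₁ = PowerSeries.C (R := K) a * PowerSeries.X := by
      ext m
      rw [NA.line1, PowerSeries.coeff_mk, hcf₁, PowerSeries.coeff_C_mul,
        PowerSeries.coeff_X]
      rcases eq_or_ne m 1 with hm | hm
      · subst hm
        rw [if_pos rfl, if_pos rfl, mul_one]
      · rw [if_neg hm, if_neg (hs0 m), if_neg, mul_zero]
        intro h
        apply hm
        have := DFunLike.congr_fun h (0 : Fin 2)
        simpa using this
    ext n
    rw [NA.line1, PowerSeries.coeff_mk, hcf₂, if_neg (hs0 n)]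
    rw [hψ, NA.comp, PowerSeries.coeff_mk]
    have hco : ∀ k, PowerSeries.coeff (R := K) n ((PowerSeries.C (R := K) a * PowerSeries.X) ^ k) =
        if n = k then a ^ k else 0 := by
      intro k
      rw [mul_pow, ← map_pow, PowerSeries.coeff_C_mul, PowerSeries.coeff_X_pow]
      split_ifs <;> simp
    rw [Finset.sum_congr rfl (fun k _ => by rw [hco k])]
    have hsum : (∑ k ∈ Finset.range (n + 1),
        PowerSeries.coeff (R := K) k φ * (if n = k then a ^ k else 0)) =
        PowerSeries.coeff (R := K) n φ * a ^ n := by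
      rw [Finset.sum_eq_single n]
      · rw [if_pos rfl]
      · intro k _ hk
        rw [if_neg (Ne.symm hk), mul_zero]
      · intro h
        exact absurd (Finset.mem_range.mpr (Nat.lt_succ_self n)) h
    rw [hsum]
    rcases eq_or_ne n 0 with hn | hn
    · subst hn
      rw [if_neg (by simp), pow_zero, mul_one,
        PowerSeries.coeff_zero_eq_constantCoeff, hφ0]
    · rw [if_pos ⟨by simp, by simpa using hn⟩]
      simp

end NAProof


/-- **Analyticity ↔ positive size** (graph case of Proposition 3.3 of Bost–Chambert-Loir):
over a complete discretely valued nonarchimedean field `K`, a formal power series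
`φ ∈ K⟦X⟧` with zero constant term has its graph analytically trivialized at some radius
`r ∈ (0,1]` if and only if `φ` has positive radius of convergence. -/
theorem graphTriv_iff_positive_radius
    {K : Type*} [NontriviallyNormedField K] [CompleteSpace K] [IsUltrametricDist K]
    [IsDiscreteValuationRing (NA.integers K)]
    (φ : PowerSeries K) (hφ0 : PowerSeries.constantCoeff (R := K) φ = 0) :
    (∃ r : ℝ, r ∈ Set.Ioc (0 : ℝ) 1 ∧ NA.GraphTrivAt φ r) ↔
      (∃ s : ℝ, 0 < s ∧
        Filter.Tendsto (fun i : ℕ => ‖PowerSeries.coeff (R := K) i φ‖ * s ^ i)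
          Filter.atTop (nhds 0)) := by
  constructor
  · rintro ⟨r, ⟨hr0, hr1⟩, f₁, f₂, h₁0, h₂0, hN₁, hN₂, hA, hB, hC, hD, hdet, hline⟩
    exact NAProof.forward φ hφ0 hr0 hr1 h₁0 hN₁ hN₂ hA hdet hline
  · rintro ⟨s, hs, htend⟩
    exact NAProof.backward φ hφ0 hs htend
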